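/- Let L = ℚ(k,l,m,n,p,q,c) be the field of rational functions over ℚ in the indeterminates k,l,m,n,p,q,c, and work in L[x,y] with T = x + y + c. Let P = −k·x·y² − l·y + m·x²·y − (n·x·y + p + q·T·x)·(2x + y + c) and Q = −x·( l + p + m·c·x + (k+n)·x·y + m·x² + q·T·x ) (a general member of Żołądek's family CR₅). Suppose a₂₀, a₁₁, a₀₀ ∈ L are such that the 4×3 matrix M with rows (a₂₀, q, −m−q), (−a₁₁, m−n−q, k+n+q), (a₀₀, p, −l−p), (0, −a₂₀, a₁₁) has rank at most 2, i.e. every 3×3 minor of M vanishes. Then the conic F = a₂₀·x² + a₁₁·x·y + c·a₂₀·x + a₀₀ is an algebraic integral curve of P dx + Q dy: F divides P·∂F/∂y − Q·∂F/∂x in L[x,y]. -/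

import Mathlib

open MvPolynomial

/-- The field `L = ℚ(k,l,m,n,p,q,c)` of rational functions over `ℚ` in seven
indeterminates, realized as the fraction field of `ℚ[k,l,m,n,p,q,c]`. -/
abbrev L5 : Type := FractionRing (MvPolynomial (Fin 7) ℚ)

/-- The `i`-th indeterminate parameter (in the order `k,l,m,n,p,q,c`), as an element of `L`. -/
noncomputable def prm (i : Fin 7) : L5 :=
  algebraMap (MvPolynomial (Fin 7) ℚ) L5 (X i)

namespace CR5

noncomputable def k : L5 := prm 0
noncomputable def l : L5 := prm 1
noncomputable def m : L5 := prm 2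
noncomputable def n : L5 := prm 3
noncomputable def p : L5 := prm 4
noncomputable def q : L5 := prm 5
noncomputable def c : L5 := prm 6

noncomputable def x : MvPolynomial (Fin 2) L5 := X 0
noncomputable def y : MvPolynomial (Fin 2) L5 := X 1

/-- `T = x + y + c`. -/
noncomputable def T : MvPolynomial (Fin 2) L5 := x + y + C c

/-- The coefficient polynomial `P` of Żołądek's family `CR₅`. -/
noncomputable def P : MvPolynomial (Fin 2) L5 :=
  -(C k * x * y^2) - C l * y + C m * x^2 * y
    - (C n * x * y + C p + C q * T * x) * (2 * x + y + C c)

/-- The coefficient polynomial `Q` of Żołądek's family `CR₅`. -/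
noncomputable def Q : MvPolynomial (Fin 2) L5 :=
  -(x * (C l + C p + C m * C c * x + (C k + C n) * x * y + C m * x^2 + C q * T * x))

/-- The `4 × 3` matrix whose rank condition singles out the coefficients of the two
integral conics of `CR₅`. -/
noncomputable def M (a₂₀ a₁₁ a₀₀ : L5) : Matrix (Fin 4) (Fin 3) L5 :=
  !![a₂₀, q, -m - q;
     -a₁₁, m - n - q, k + n + q;
     a₀₀, p, -l - p;
     0, -a₂₀, a₁₁]

set_option maxHeartbeats 4000000 in
set_option synthInstance.maxHeartbeats 400000 in
/-- **If `(a₂₀, a₁₁, a₀₀)` makes the matrix `M` of rank at most 2 (all `3 × 3` minors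
vanish), then the conic `F = a₂₀·x² + a₁₁·x·y + c·a₂₀·x + a₀₀` is an algebraic integral
curve of the general member of Żołądek's family `CR₅`**: `F` divides `P·F_y − Q·F_x`. -/
theorem conic_is_integral_curve
    (a₂₀ a₁₁ a₀₀ : L5)
    (hminors : ∀ i₀ i₁ i₂ : Fin 4,
      ((M a₂₀ a₁₁ a₀₀).submatrix ![i₀, i₁, i₂] id).det = 0) :
    (C a₂₀ * x^2 + C a₁₁ * x * y + C c * C a₂₀ * x + C a₀₀)
      ∣ P * pderiv 1 (C a₂₀ * x^2 + C a₁₁ * x * y + C c * C a₂₀ * x + C a₀₀)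
        - Q * pderiv 0 (C a₂₀ * x^2 + C a₁₁ * x * y + C c * C a₂₀ * x + C a₀₀) := by
  have hq : q ≠ 0 := by
    simp only [q, prm]
    exact fun h => X_ne_zero (5 : Fin 7)
      ((map_eq_zero_iff _ (IsFractionRing.injective (MvPolynomial (Fin 7) ℚ) L5)).mp h)
  have e1 : q * (a₁₁*a₁₁) + q * (a₂₀*a₂₀) + n * (a₂₀*a₂₀) + k * (a₂₀*a₂₀)
      = q * (a₂₀*a₁₁) + q * (a₂₀*a₁₁) + n * (a₂₀*a₁₁) := by
    have h := hminors 0 1 3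
    rw [Matrix.det_fin_three] at h; simp [M] at h
    linear_combination h
  have e2 : q * (a₂₀*a₀₀) + p * (a₂₀*a₁₁) + m * (a₂₀*a₀₀)
      = q * (a₁₁*a₀₀) + p * (a₂₀*a₂₀) + l * (a₂₀*a₂₀) := by
    have h := hminors 0 2 3
    rw [Matrix.det_fin_three] at h; simp [M] at h
    linear_combination h
  have e3 : m * (p*a₁₁) + m * (m*a₀₀) + l * (q*a₂₀) + l * (n*a₂₀) + k * (q*a₀₀)
      = m * (p*a₂₀) + m * (n*a₀₀) + l * (q*a₁₁) + l * (m*a₂₀) + k * (p*a₂₀) := by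
    have h := hminors 0 1 2
    rw [Matrix.det_fin_three] at h; simp [M] at h
    linear_combination h
  have pdy : pderiv 1 (C a₂₀ * x^2 + C a₁₁ * x * y + C c * C a₂₀ * x + C a₀₀)
      = C a₁₁ * x := by
    simp [x, y]
  have pdx : pderiv 0 (C a₂₀ * x^2 + C a₁₁ * x * y + C c * C a₂₀ * x + C a₀₀)
      = 2 * C a₂₀ * x + C a₁₁ * y + C c * C a₂₀ := by
    simp [x, y]; ring
  rw [pdy, pdx]
  by_cases ha : a₂₀ = 0
  · have h0 : q * (a₁₁ * a₁₁) = 0 := by rw [ha] at e1; linear_combination e1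
    have h11 : a₁₁ = 0 := by
      rcases mul_eq_zero.mp ((mul_eq_zero.mp h0).resolve_left hq) with h | h <;> exact h
    rw [ha, h11]
    simp
  · have hC1 : (C (q * (a₁₁*a₁₁) + q * (a₂₀*a₂₀) + n * (a₂₀*a₂₀) + k * (a₂₀*a₂₀))
        : MvPolynomial (Fin 2) L5)
        = C (q * (a₂₀*a₁₁) + q * (a₂₀*a₁₁) + n * (a₂₀*a₁₁)) := by rw [e1]
    have hC2 : (C (q * (a₂₀*a₀₀) + p * (a₂₀*a₁₁) + m * (a₂₀*a₀₀))
        : MvPolynomial (Fin 2) L5)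
        = C (q * (a₁₁*a₀₀) + p * (a₂₀*a₂₀) + l * (a₂₀*a₂₀)) := by rw [e2]
    have hC3 : (C (m * (p*a₁₁) + m * (m*a₀₀) + l * (q*a₂₀) + l * (n*a₂₀) + k * (q*a₀₀))
        : MvPolynomial (Fin 2) L5)
        = C (m * (p*a₂₀) + m * (n*a₀₀) + l * (q*a₁₁) + l * (m*a₂₀) + k * (p*a₂₀)) := by rw [e3]
    simp only [C_add, C_mul] at hC1 hC2 hC3
    have key : (C q * C a₂₀^3) *
        (P * (C a₁₁ * x) - Q * (2 * C a₂₀ * x + C a₁₁ * y + C c * C a₂₀))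
        = (C a₂₀ * x^2 + C a₁₁ * x * y + C c * C a₂₀ * x + C a₀₀) *
          ((-2) * C q^2 * C a₁₁^3 * y^2 + 2 * C q^2 * C a₂₀ * C a₁₁ * C a₀₀ + 4 * C q^2 * C a₂₀ * C a₁₁^2 * y^2 + 2 * C q^2 * C a₂₀ * C a₁₁^2 * x * y + (-2) * C q^2 * C a₂₀^2 * C a₀₀ + (-2) * C q^2 * C a₂₀^2 * C a₁₁ * y^2 + (-4) * C q^2 * C a₂₀^2 * C a₁₁ * x * y + (-2) * C q^2 * C a₂₀^2 * C a₁₁ * x^2 + 2 * C q^2 * C a₂₀^3 * x * y + 2 * C q^2 * C a₂₀^3 * x^2 + (-1) * C q^2 * C c * C a₂₀ * C a₁₁^2 * y + 2 * C q^2 * C c * C a₂₀^2 * C a₁₁ * y + (-1) * C q^2 * C c * C a₂₀^2 * C a₁₁ * x + (-1) * C q^2 * C c * C a₂₀^3 * y + C q^2 * C c * C a₂₀^3 * x + (-2) * C p * C q * C a₂₀^2 * C a₁₁ + 2 * C p * C q * C a₂₀^3 + 2 * C n * C q * C a₂₀ * C a₁₁^2 * y^2 + (-2) * C n * C q * C a₂₀^2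 * C a₁₁ * y^2 + (-2) * C n * C q * C a₂₀^2 * C a₁₁ * x * y + 2 * C n * C q * C a₂₀^3 * x * y + C n * C q * C c * C a₂₀^2 * C a₁₁ * y + (-1) * C n * C q * C c * C a₂₀^3 * y + (-2) * C m * C q * C a₂₀^2 * C a₀₀ + 2 * C m * C q * C a₂₀^3 * x^2 + C m * C q * C c * C a₂₀^3 * x + 2 * C l * C q * C a₂₀^3 + (-2) * C k * C q * C a₂₀^2 * C a₁₁ * y^2 + 2 * C k * C q * C a₂₀^3 * x * y + (-1) * C k * C q * C c * C a₂₀^3 * y) := by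
      simp only [P, Q, T]
      linear_combination
        (2 * C q * C a₁₁ * C a₀₀ * y^2 + 2 * C q * C a₁₁^2 * x * y^3 + (-4) * C q * C a₂₀ * C a₀₀ * x * y + C q * C c * C a₂₀ * C a₀₀ * y + 3 * C q * C c * C a₂₀ * C a₁₁ * x * y^2 + C q * C c^2 * C a₂₀^2 * x * y + 2 * C p * C a₂₀^2 * x * y) * hC1
          + (2 * C q * C a₂₀ * C a₀₀ + 2 * C q * C a₂₀^2 * x * y + C q * C c * C a₂₀^2 * x + 2 * C n * C a₂₀^2 * x * y + (-2) * C m * C a₂₀^2 * x * y) * hC2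
          + (2 * C a₂₀^3 * x * y) * hC3
    have hu : IsUnit (C q * C a₂₀^3 : MvPolynomial (Fin 2) L5) := by
      have h1 : IsUnit (C q : MvPolynomial (Fin 2) L5) :=
        (Ne.isUnit hq).map (C : L5 →+* MvPolynomial (Fin 2) L5)
      have h2 : IsUnit (C a₂₀ : MvPolynomial (Fin 2) L5) :=
        (Ne.isUnit ha).map (C : L5 →+* MvPolynomial (Fin 2) L5)
      exact h1.mul (h2.pow 3)
    exact (hu.dvd_mul_left).mp ⟨_, key⟩

end CR5
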